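/- Let ζ ∈ (0,1), set s = √(1−ζ²), and define u* : ℝ × ℝ → ℝ by u*(x,t) = 4·arctan( (1/ζ)·sinh(ζ·t/s) / cosh(x/s) ). Then for all (x,t) ∈ ℝ², ∂ₜₜu*(x,t) − ∂ₓₓu*(x,t) + sin(u*(x,t)) = 0. -/

import Mathlib

set_option maxHeartbeats 1000000 in
lemma core (z s S1 C1 S2 C2 : ℝ) (hz : z ≠ 0) (hs : s ≠ 0) (hC2 : C2 ≠ 0)
    (h1 : C1^2 = 1 + S1^2) (h2 : C2^2 = 1 + S2^2) (h3 : s^2 = 1 - z^2) :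
    (4*z^2*C2*(S1*(z/s))*(s*(z^2*C2^2+S1^2)) - 4*z^2*C2*C1*(2*z*S1*C1)) / (s*(z^2*C2^2+S1^2))^2
    - ((-4*(1/z*S1)*(C2*(1/s)))*(s*(C2^2+(1/z*S1)^2)) - (-4*(1/z*S1)*S2)*(2*C2*S2)) / (s*(C2^2+(1/z*S1)^2))^2
    + 4*(1/z*S1/C2)*(1-(1/z*S1/C2)^2)/(1+(1/z*S1/C2)^2)^2 = 0 := by
  have hD : z^2*C2^2+S1^2 ≠ 0 := by positivity
  have e2 : C2^2 + (1/z*S1)^2 = (z^2*C2^2+S1^2)/z^2 := by field_simp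
  have e3 : 1 + (1/z*S1/C2)^2 = (z^2*C2^2+S1^2)/(z^2*C2^2) := by field_simp
  rw [e2, e3]
  field_simp
  linear_combination (-8*z^3*C2*S1) * h1 + (8*z^3*C2*S1) * h2
    + (4*z*C2*S1*(z^2*C2^2-S1^2)) * h3



/-- The function u*(x,t) = 4·arctan( (1/ζ)·sinh(ζt/s) / cosh(x/s) ) with s = √(1−ζ²),
ζ ∈ (0,1), is an exact solution of the 1D sine-Gordon equation
∂ₜₜu − ∂ₓₓu + sin(u) = 0. -/
theorem uStar_solves_sineGordon
    (ζ : ℝ) (hζ : ζ ∈ Set.Ioo (0:ℝ) 1)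
    (s : ℝ) (hs : s = Real.sqrt (1 - ζ ^ 2))
    (u : ℝ → ℝ → ℝ)
    (hu : ∀ x t : ℝ,
      u x t = 4 * Real.arctan ((1 / ζ) * Real.sinh (ζ * t / s) / Real.cosh (x / s))) :
    ∀ x t : ℝ,
      deriv (fun r => deriv (fun r' => u x r') r) t
        - deriv (fun y => deriv (fun y' => u y' t) y) x
        + Real.sin (u x t) = 0 := by
  obtain ⟨hζ0, hζ1⟩ := hζ
  have hζ0' : ζ ≠ 0 := ne_of_gt hζ0
  have h1ζ : (0:ℝ) < 1 - ζ^2 := by nlinarith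
  have hs0 : 0 < s := by rw [hs]; positivity
  have hs' : s ≠ 0 := ne_of_gt hs0
  have hs2 : s^2 = 1 - ζ^2 := by rw [hs]; exact Real.sq_sqrt h1ζ.le
  intro x t
  set c := Real.cosh (x/s) with hc_def
  have hc : 0 < c := Real.cosh_pos _
  -- first derivative in t (for all r)
  have hdt : ∀ r, HasDerivAt (fun r' => u x r')
      (4*ζ^2*c*Real.cosh (ζ*r/s) / (s*(ζ^2*c^2 + Real.sinh (ζ*r/s)^2))) r := by
    intro r
    have heq : (fun r' => u x r')
        = fun r' => 4 * Real.arctan ((1/ζ) * Real.sinh (ζ * r' / s) / c) := by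
      funext r'; rw [hu]
    rw [heq]
    have hlin : HasDerivAt (fun r' : ℝ => ζ * r' / s) (ζ / s) r := by
      simpa using ((hasDerivAt_id r).const_mul ζ).div_const s
    have hsinh : HasDerivAt (fun r' => Real.sinh (ζ * r' / s))
        (Real.cosh (ζ*r/s) * (ζ/s)) r := (Real.hasDerivAt_sinh _).comp r hlin
    have hF : HasDerivAt (fun r' => (1/ζ) * Real.sinh (ζ * r' / s) / c)
        ((1/ζ) * (Real.cosh (ζ*r/s) * (ζ/s)) / c) r :=
      (hsinh.const_mul _).div_const c
    have harc := ((Real.hasDerivAt_arctan _).comp r hF).const_mul 4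
    refine harc.congr_deriv ?_
    have h1 : 1 + ((1/ζ) * Real.sinh (ζ*r/s) / c)^2
        = (ζ^2*c^2 + Real.sinh (ζ*r/s)^2)/(ζ^2*c^2) := by field_simp
    rw [h1]
    have hpos : (0:ℝ) < ζ^2*c^2 + Real.sinh (ζ*r/s)^2 := by positivity
    field_simp
  -- first derivative in x (for all y), with k the constant
  set k := (1/ζ) * Real.sinh (ζ*t/s) with hk_def
  have hdx : ∀ y, HasDerivAt (fun y' => u y' t)
      (-4*k*Real.sinh (y/s) / (s*(Real.cosh (y/s)^2 + k^2))) y := by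
    intro y
    have heq : (fun y' => u y' t)
        = fun y' => 4 * Real.arctan (k / Real.cosh (y'/s)) := by
      funext y'; rw [hu]
    rw [heq]
    have hlin : HasDerivAt (fun y' : ℝ => y' / s) (1 / s) y := by
      simpa using (hasDerivAt_id y).div_const s
    have hcosh : HasDerivAt (fun y' => Real.cosh (y' / s))
        (Real.sinh (y/s) * (1/s)) y := (Real.hasDerivAt_cosh _).comp y hlin
    have hcpos : 0 < Real.cosh (y/s) := Real.cosh_pos _
    have hF : HasDerivAt (fun y' => k / Real.cosh (y' / s))
        ((0 * Real.cosh (y/s) - k * (Real.sinh (y/s) * (1/s))) / (Real.cosh (y/s))^2) y :=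
      (hasDerivAt_const y k).div hcosh (ne_of_gt hcpos)
    have harc := ((Real.hasDerivAt_arctan _).comp y hF).const_mul 4
    refine harc.congr_deriv ?_
    have h1 : 1 + (k / Real.cosh (y/s))^2
        = (Real.cosh (y/s)^2 + k^2)/(Real.cosh (y/s)^2) := by field_simp
    rw [h1]
    have hpos : (0:ℝ) < Real.cosh (y/s)^2 + k^2 := by positivity
    field_simp
    ring
  -- second derivative in t
  have hDtpos : (0:ℝ) < s*(ζ^2*c^2 + Real.sinh (ζ*t/s)^2) := by positivity
  have hdtt : deriv (fun r => deriv (fun r' => u x r') r) t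
      = ((4*ζ^2*c*(Real.sinh (ζ*t/s)*(ζ/s))) * (s*(ζ^2*c^2 + Real.sinh (ζ*t/s)^2))
          - (4*ζ^2*c*Real.cosh (ζ*t/s)) * (2*ζ*Real.sinh (ζ*t/s)*Real.cosh (ζ*t/s)))
        / (s*(ζ^2*c^2 + Real.sinh (ζ*t/s)^2))^2 := by
    have heq : (fun r => deriv (fun r' => u x r') r)
        = fun r => (4*ζ^2*c*Real.cosh (ζ*r/s)) / (s*(ζ^2*c^2 + Real.sinh (ζ*r/s)^2)) := by
      funext r; exact (hdt r).deriv
    rw [heq]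
    have hlin : HasDerivAt (fun r' : ℝ => ζ * r' / s) (ζ / s) t := by
      simpa using ((hasDerivAt_id t).const_mul ζ).div_const s
    have hN : HasDerivAt (fun r => 4*ζ^2*c*Real.cosh (ζ*r/s))
        (4*ζ^2*c*(Real.sinh (ζ*t/s)*(ζ/s))) t := by
      exact (((Real.hasDerivAt_cosh _).comp t hlin).const_mul _)
    have hD : HasDerivAt (fun r => s*(ζ^2*c^2 + Real.sinh (ζ*r/s)^2))
        (2*ζ*Real.sinh (ζ*t/s)*Real.cosh (ζ*t/s)) t := by
      have h2 : HasDerivAt (fun r => Real.sinh (ζ*r/s)^2)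
          (2 * Real.sinh (ζ*t/s) * (Real.cosh (ζ*t/s)*(ζ/s))) t := by
        have := ((Real.hasDerivAt_sinh _).comp t hlin).pow 2
        refine this.congr_deriv ?_
        simp
      have := ((h2.const_add (ζ^2*c^2)).const_mul s)
      refine this.congr_deriv ?_
      field_simp
    have := hN.div hD (ne_of_gt hDtpos)
    exact this.deriv
  -- second derivative in x
  have hk2 : (0:ℝ) < Real.cosh (x/s)^2 + k^2 := by positivity
  have hDxpos : (0:ℝ) < s*(Real.cosh (x/s)^2 + k^2) := by positivity
  have hdxx : deriv (fun y => deriv (fun y' => u y' t) y) x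
      = ((-4*k*(Real.cosh (x/s)*(1/s))) * (s*(Real.cosh (x/s)^2 + k^2))
          - (-4*k*Real.sinh (x/s)) * (2*Real.cosh (x/s)*Real.sinh (x/s)))
        / (s*(Real.cosh (x/s)^2 + k^2))^2 := by
    have heq : (fun y => deriv (fun y' => u y' t) y)
        = fun y => (-4*k*Real.sinh (y/s)) / (s*(Real.cosh (y/s)^2 + k^2)) := by
      funext y; exact (hdx y).deriv
    rw [heq]
    have hlin : HasDerivAt (fun y' : ℝ => y' / s) (1 / s) x := by
      simpa using (hasDerivAt_id x).div_const s
    have hN : HasDerivAt (fun y => -4*k*Real.sinh (y/s))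
        (-4*k*(Real.cosh (x/s)*(1/s))) x :=
      (((Real.hasDerivAt_sinh _).comp x hlin).const_mul _)
    have hD : HasDerivAt (fun y => s*(Real.cosh (y/s)^2 + k^2))
        (2*Real.cosh (x/s)*Real.sinh (x/s)) x := by
      have h2 : HasDerivAt (fun y => Real.cosh (y/s)^2)
          (2 * Real.cosh (x/s) * (Real.sinh (x/s)*(1/s))) x := by
        have := ((Real.hasDerivAt_cosh _).comp x hlin).pow 2
        refine this.congr_deriv ?_
        simp
      have := ((h2.add_const (k^2)).const_mul s)
      refine this.congr_deriv ?_
      field_simp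
    have := hN.div hD (ne_of_gt hDxpos)
    exact this.deriv
  -- sine term
  set F := (1/ζ) * Real.sinh (ζ*t/s) / c with hF_def
  have hsin : Real.sin (u x t) = 4*F*(1-F^2)/(1+F^2)^2 := by
    rw [hu]
    have h4 : (4:ℝ) * Real.arctan ((1/ζ) * Real.sinh (ζ*t/s) / Real.cosh (x/s))
        = 2*(2*Real.arctan F) := by rw [hF_def, hc_def]; ring
    rw [h4, Real.sin_two_mul, Real.cos_two_mul, Real.sin_two_mul,
      Real.cos_arctan, Real.sin_arctan]
    have hpos : (0:ℝ) < 1 + F^2 := by positivity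
    set q := Real.sqrt (1+F^2) with hq_def
    have hq : q ^ 2 = 1+F^2 := Real.sq_sqrt (le_of_lt hpos)
    have hqpos : 0 < q := Real.sqrt_pos.mpr hpos
    field_simp
    linear_combination ((4*F^3-12*F)*(q^2+1+F^2) + 12*F + 8*F^3 - 4*F^5 + 8*F*(q^2-1-F^2)) * hq
  rw [hdtt, hdxx, hsin, hF_def, hk_def, hc_def]
  have hC1 : Real.cosh (ζ*t/s)^2 = 1 + Real.sinh (ζ*t/s)^2 := by
    rw [Real.cosh_sq]; ring
  have hC2e : Real.cosh (x/s)^2 = 1 + Real.sinh (x/s)^2 := by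
    rw [Real.cosh_sq]; ring
  have hcx : Real.cosh (x/s) ≠ 0 := ne_of_gt (Real.cosh_pos _)
  have key := core ζ s (Real.sinh (ζ*t/s)) (Real.cosh (ζ*t/s)) (Real.sinh (x/s))
    (Real.cosh (x/s)) hζ0' hs' hcx hC1 hC2e (by rw [hs2])
  linear_combination key
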